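/- arXiv:1902.09220 — 4 statements merged into one kernel-verified Lean document; each statement's English description precedes it below -/
import Mathlib

section
/- Let K be a field of characteristic ≠ 2, let g ∈ K[x] be monic of degree d ≥ 1 and irreducible over K, and let f(x) = x^2 + bx + c be monic quadratic with critical point γ = -b/2. If no element of {(-1)^d · g(f(γ))} ∪ {g(f^n(γ)) : n ≥ 2} is a square in K, then g(f^n(x)) is irreducible over K for all n ≥ 1. -/
open Polynomial

set_option maxHeartbeats 1600000

/-- Abstract Capelli-type lemma over a tower of fields. -/
theorem minpoly_eq_comp_sq {K L M : Type*} [Field K] [Field L] [Field M]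
    [Algebra K L] [Algebra L M] [Algebra K M] [IsScalarTower K L M]
    [Module.Finite K L] [Module.Finite L M]
    (H : K[X]) (hmon : H.Monic)
    (β : L) (hβL : Algebra.adjoin K ({β} : Set L) = ⊤) (hβroot : aeval β H = 0)
    (hrkKL : Module.finrank K L = H.natDegree) (hrkLM : Module.finrank L M = 2)
    (θ : M) (hθ2 : θ ^ 2 = algebraMap L M β)
    (hθM : Algebra.adjoin L ({θ} : Set M) = ⊤) :
    Irreducible (H.comp (X ^ 2)) := by
  haveI : Module.Finite K M := Module.Finite.trans L M
  have hrkKM : Module.finrank K M = H.natDegree * 2 := by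
    rw [← Module.finrank_mul_finrank K L M, hrkKL, hrkLM]
  -- θ generates M over K
  have hadj : Algebra.adjoin K ({θ} : Set M) = ⊤ := by
    rw [eq_top_iff]
    have hLmem : ∀ z : L, algebraMap L M z ∈ Algebra.adjoin K ({θ} : Set M) := by
      intro z
      have hz : z ∈ (aeval β : K[X] →ₐ[K] L).range := by
        rw [← Algebra.adjoin_singleton_eq_range_aeval, hβL]
        exact Algebra.mem_top
      obtain ⟨p, hp⟩ := hz
      have e1 : algebraMap L M z = aeval (θ ^ 2) p := by
        rw [← hp, hθ2]
        exact (Polynomial.aeval_algebraMap_apply M β p).symm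
      rw [e1]
      have hle : Algebra.adjoin K ({θ ^ 2} : Set M) ≤ Algebra.adjoin K ({θ} : Set M) :=
        Algebra.adjoin_le (Set.singleton_subset_iff.mpr
          (pow_mem (Algebra.subset_adjoin (Set.mem_singleton θ)) 2))
      exact hle (Polynomial.aeval_mem_adjoin_singleton K (θ ^ 2))
    intro z _
    have hz : z ∈ (aeval θ : L[X] →ₐ[L] M).range := by
      rw [← Algebra.adjoin_singleton_eq_range_aeval, hθM]
      exact Algebra.mem_top
    obtain ⟨P, hP⟩ := hz
    have e2 : z = ∑ i ∈ P.support, algebraMap L M (P.coeff i) * θ ^ i := by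
      rw [← hP]
      simp only [AlgHom.toRingHom_eq_coe, RingHom.coe_coe]
      rw [Polynomial.aeval_def, Polynomial.eval₂_eq_sum, Polynomial.sum_def]
    rw [e2]
    refine Subalgebra.sum_mem _ fun i _ => ?_
    exact mul_mem (hLmem _) (pow_mem (Algebra.subset_adjoin (Set.mem_singleton θ)) i)
  have hint : IsIntegral K θ := IsIntegral.of_finite K θ
  have hminθdeg : (minpoly K θ).natDegree = H.natDegree * 2 := by
    have h1 : IntermediateField.adjoin K ({θ} : Set M) = ⊤ := by
      apply IntermediateField.toSubalgebra_injective
      rw [IntermediateField.adjoin_simple_toSubalgebra_of_isAlgebraic hint.isAlgebraic, hadj]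
      rfl
    have h2 := IntermediateField.adjoin.finrank hint
    rw [h1, IntermediateField.finrank_top', hrkKM] at h2
    exact h2.symm
  have haev : aeval θ (H.comp (X ^ 2)) = 0 := by
    rw [aeval_comp, map_pow, aeval_X, hθ2, Polynomial.aeval_algebraMap_apply, hβroot, map_zero]
  have hdvd : minpoly K θ ∣ H.comp (X ^ 2) := minpoly.dvd K θ haev
  have hmc : (H.comp (X ^ 2)).Monic := hmon.comp (monic_X_pow 2) (by simp [natDegree_X_pow])
  have hdegc : (H.comp (X ^ 2)).natDegree = H.natDegree * 2 := by
    rw [natDegree_comp, natDegree_X_pow]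
  have heq : minpoly K θ = H.comp (X ^ 2) := by
    apply Polynomial.eq_of_dvd_of_natDegree_le_of_leadingCoeff hdvd
    · rw [hdegc, hminθdeg]
    · rw [(minpoly.monic hint).leadingCoeff, hmc.leadingCoeff]
  rw [← heq]
  exact minpoly.irreducible hint


set_option maxHeartbeats 800000 in
/-- Capelli-type step: if `H` is monic irreducible and `(-1)^deg H * H(0)` is not a square,
then `H(X^2)` is irreducible. -/
theorem capelli_step {K : Type*} [Field K] (H : K[X]) (hmon : H.Monic) (hirr : Irreducible H)
    (hns : ¬ IsSquare ((-1 : K) ^ H.natDegree * H.coeff 0)) :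
    Irreducible (H.comp (X ^ 2)) := by
  have hH0 : H ≠ 0 := hmon.ne_zero
  haveI : Fact (Irreducible H) := ⟨hirr⟩
  -- β is not a square in L, by the norm argument
  have hnorm : Algebra.norm K (AdjoinRoot.root H) = (-1 : K) ^ H.natDegree * H.coeff 0 := by
    have h1 := Algebra.PowerBasis.norm_gen_eq_coeff_zero_minpoly (AdjoinRoot.powerBasis hH0)
    rwa [AdjoinRoot.powerBasis_gen, AdjoinRoot.minpoly_root hH0, hmon.leadingCoeff, inv_one,
      map_one, mul_one, AdjoinRoot.powerBasis_dim] at h1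
  have hβns : ¬ IsSquare (AdjoinRoot.root H) := by
    rintro ⟨s, hs⟩
    rw [hs, map_mul] at hnorm
    exact hns ⟨Algebra.norm K s, hnorm.symm⟩
  have hq : Irreducible (X ^ 2 - C (AdjoinRoot.root H)) :=
    X_pow_sub_C_irreducible_of_prime Nat.prime_two (fun r hr => hβns ⟨r, by rw [← hr]; ring⟩)
  haveI : Fact (Irreducible (X ^ 2 - C (AdjoinRoot.root H))) := ⟨hq⟩
  haveI : Module.Finite K (AdjoinRoot H) := (AdjoinRoot.powerBasis hH0).finite
  haveI : Module.Finite (AdjoinRoot H) (AdjoinRoot (X ^ 2 - C (AdjoinRoot.root H))) :=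
    (AdjoinRoot.powerBasis hq.ne_zero).finite
  apply minpoly_eq_comp_sq (L := AdjoinRoot H)
    (M := AdjoinRoot (X ^ 2 - C (AdjoinRoot.root H))) H hmon (AdjoinRoot.root H)
    AdjoinRoot.adjoinRoot_eq_top
    (by rw [AdjoinRoot.aeval_eq, AdjoinRoot.mk_self])
    (by rw [(AdjoinRoot.powerBasis hH0).finrank, AdjoinRoot.powerBasis_dim])
    (by rw [(AdjoinRoot.powerBasis hq.ne_zero).finrank, AdjoinRoot.powerBasis_dim,
          natDegree_X_pow_sub_C])
    (AdjoinRoot.root (X ^ 2 - C (AdjoinRoot.root H)))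
    (by
      rw [AdjoinRoot.algebraMap_eq]
      have h2 := AdjoinRoot.mk_self (f := X ^ 2 - C (AdjoinRoot.root H))
      rw [map_sub, map_pow, AdjoinRoot.mk_X, AdjoinRoot.mk_C, sub_eq_zero] at h2
      exact h2)
    AdjoinRoot.adjoinRoot_eq_top

/-- Composition with a linear polynomial preserves irreducibility. -/
theorem irreducible_comp_X_add_C {K : Type*} [Field K] {p : K[X]} (t : K)
    (hp : Irreducible p) : Irreducible (p.comp (X + C t)) := by
  have h := (MulEquiv.irreducible_iff (Polynomial.algEquivAevalXAddC t)).mpr hp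
  rwa [Polynomial.algEquivAevalXAddC_apply, ← Polynomial.comp_eq_aeval] at h

/-- Key step: if `h` is monic irreducible and `(-1)^deg h * h(δ)` is not a square,
then `h((X - γ)^2 + δ)` is irreducible. -/
theorem key_step {K : Type*} [Field K] (h : K[X]) (hmon : h.Monic) (hirr : Irreducible h)
    (γ δ : K) (hns : ¬ IsSquare ((-1 : K) ^ h.natDegree * h.eval δ)) :
    Irreducible (h.comp ((X - C γ) ^ 2 + C δ)) := by
  set H := h.comp (X + C δ) with hH
  have hHmon : H.Monic := hmon.comp_X_add_C δ
  have hHirr : Irreducible H := irreducible_comp_X_add_C δ hirr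
  have hHdeg : H.natDegree = h.natDegree := by
    rw [hH, natDegree_comp]; simp
  have hH0 : H.coeff 0 = h.eval δ := by
    rw [Polynomial.coeff_zero_eq_eval_zero, hH, Polynomial.eval_comp]
    simp
  have hcap : Irreducible (H.comp (X ^ 2)) := by
    apply capelli_step H hHmon hHirr
    rw [hHdeg, hH0]; exact hns
  have hfin := irreducible_comp_X_add_C (-γ) hcap
  have : ((H.comp (X ^ 2)).comp (X + C (-γ))) = h.comp ((X - C γ) ^ 2 + C δ) := by
    rw [hH, Polynomial.comp_assoc, Polynomial.comp_assoc]
    congr 1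
    simp only [add_comp, X_comp, C_comp, pow_comp, map_neg]
    ring
  rwa [this] at hfin

open Polynomial in
theorem stmt_7 {K : Type*} [Field K] (h2 : (2 : K) ≠ 0)
    (g : K[X]) (d : ℕ) (hd : 1 ≤ d) (hgdeg : g.natDegree = d)
    (hgmon : g.Monic) (hgirr : Irreducible g)
    (b c : K) (f : K[X]) (hf : f = X ^ 2 + C b * X + C c)
    (γ : K) (hγ : γ = -b / 2)
    (fiter : ℕ → K[X]) (h0 : fiter 0 = X) (hsucc : ∀ n, fiter (n + 1) = f.comp (fiter n))
    (hsq1 : ¬ IsSquare ((-1 : K) ^ d * g.eval ((fiter 1).eval γ)))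
    (hsqn : ∀ n, 2 ≤ n → ¬ IsSquare (g.eval ((fiter n).eval γ))) :
    ∀ n, 1 ≤ n → Irreducible (g.comp (fiter n)) := by
  -- f in completed-square form
  have hb : b = -(2 * γ) := by rw [hγ]; field_simp
  have hfeq : f = (X - C γ) ^ 2 + C (f.eval γ) := by
    have he : f.eval γ = γ ^ 2 + b * γ + c := by rw [hf]; simp
    rw [he, hf, hb]
    simp only [map_neg, map_mul, map_add, map_pow, map_ofNat]
    ring
  have hfiter1 : fiter 1 = f := by rw [hsucc 0, h0, Polynomial.comp_X]
  -- fiter (n+1) = (fiter n).comp f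
  have hcomm : ∀ n, fiter (n + 1) = (fiter n).comp f := by
    intro n
    induction n with
    | zero => rw [hfiter1, h0, Polynomial.X_comp]
    | succ n ih => rw [hsucc (n + 1), ih, ← Polynomial.comp_assoc, ← hsucc n, ← ih]
  -- f is monic of degree 2
  have hfmon : f.Monic := by
    rw [hf, add_assoc]
    exact Polynomial.monic_X_pow_add
      (lt_of_le_of_lt (Polynomial.degree_linear_le (a := b) (b := c)) (by norm_num))
  have hfdeg : f.natDegree = 2 := by rw [hf]; compute_degree!
  -- fiter n is monic of degree 2^n
  have hiter : ∀ n, (fiter n).Monic ∧ (fiter n).natDegree = 2 ^ n := by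
    intro n
    induction n with
    | zero => rw [h0]; exact ⟨Polynomial.monic_X, Polynomial.natDegree_X⟩
    | succ n ih =>
      rw [hsucc n]
      refine ⟨hfmon.comp ih.1 (by rw [ih.2]; positivity), ?_⟩
      rw [Polynomial.natDegree_comp, hfdeg, ih.2]
      ring
  intro n hn
  induction n with
  | zero => omega
  | succ n ih =>
    rcases Nat.eq_or_lt_of_le hn with hn1 | hn2
    · -- base case n + 1 = 1
      have hn0 : n = 0 := by omega
      subst hn0
      have hk := key_step g hgmon hgirr γ (f.eval γ) (by
        rw [hgdeg, ← hfiter1]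
        exact hsq1)
      rwa [← hfeq, ← hfiter1] at hk
    · -- inductive step: n ≥ 1
      have hn' : 1 ≤ n := by omega
      have hirr' := ih hn'
      set h := g.comp (fiter n) with hh
      have hhmon : h.Monic := hgmon.comp (hiter n).1 (by rw [(hiter n).2]; positivity)
      have hhdeg : h.natDegree = d * 2 ^ n := by
        rw [hh, Polynomial.natDegree_comp, hgdeg, (hiter n).2]
      have hns : ¬ IsSquare ((-1 : K) ^ h.natDegree * h.eval (f.eval γ)) := by
        have heval : h.eval (f.eval γ) = g.eval ((fiter (n + 1)).eval γ) := by
          rw [hh, Polynomial.eval_comp, hcomm n, Polynomial.eval_comp]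
        have heven : Even (h.natDegree) := by
          obtain ⟨m, rfl⟩ : ∃ m, n = m + 1 := ⟨n - 1, by omega⟩
          rw [hhdeg]
          exact ⟨d * 2 ^ m, by rw [pow_succ]; ring⟩
        rw [heval, heven.neg_one_pow, one_mul]
        exact hsqn (n + 1) (by omega)
      have hk := key_step h hhmon hirr' γ (f.eval γ) hns
      rw [← hfeq] at hk
      have : h.comp f = g.comp (fiter (n + 1)) := by
        rw [hh, Polynomial.comp_assoc, ← hcomm n]
      rwa [this] at hk
end

section
/- Let c ≥ 2 be an odd integer, n ≥ 2, N = 2^(n-1) - 1, and suppose a_n(c) = s^2 is a perfect square, where a_1 = 1, a_k = a_{k-1}^2 + c^(2^(k-1)-1). Then there exist coprime integers u, v with c = uv, s + a_{n-1} = v^N, s - a_{n-1} = u^N, and hence v^N - u^N = 2·a_{n-1}(c). -/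
theorem stmt_12 (c : ℤ) (hc : 2 ≤ c) (hodd : Odd c) (a : ℕ → ℤ) (h1 : a 1 = 1)
    (hrec : ∀ n, 2 ≤ n → a n = (a (n - 1)) ^ 2 + c ^ (2 ^ (n - 1) - 1))
    (n : ℕ) (hn : 2 ≤ n) (N : ℕ) (hN : N = 2 ^ (n - 1) - 1)
    (s : ℤ) (hspos : 0 < s) (hs : s ^ 2 = a n) :
    ∃ u v : ℤ, IsCoprime u v ∧ c = u * v ∧
      s + a (n - 1) = v ^ N ∧ s - a (n - 1) = u ^ N ∧
      v ^ N - u ^ N = 2 * a (n - 1) := by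
  -- N is odd and positive
  have h2n : 2 ≤ 2 ^ (n - 1) := by
    calc (2:ℕ) = 2 ^ 1 := rfl
    _ ≤ 2 ^ (n - 1) := Nat.pow_le_pow_right (by norm_num) (by omega)
  have hNodd : Odd N := by
    rw [hN]
    have he : Even (2 ^ (n - 1)) := (Nat.even_pow).2 ⟨even_two, by omega⟩
    exact Nat.Even.sub_odd (by omega) he odd_one
  have hNpos : 1 ≤ N := by omega
  -- c is coprime to every a m for m ≥ 1
  have hcop : ∀ m, 1 ≤ m → IsCoprime c (a m) := by
    intro m hm
    induction m with
    | zero => omega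
    | succ k ih =>
      rcases Nat.lt_or_ge k 1 with hk | hk
      · interval_cases k
        · rw [h1]; exact isCoprime_one_right
      · have hk2 : 2 ≤ k + 1 := by omega
        have := hrec (k + 1) hk2
        simp only [Nat.add_sub_cancel] at this
        rw [this]
        have hck : IsCoprime c ((a k) ^ 2) := (ih hk).pow_right
        have hNk : 1 ≤ 2 ^ k - 1 := by
          have : 2 ≤ 2 ^ k := by
            calc (2:ℕ) = 2 ^ 1 := rfl
            _ ≤ 2 ^ k := Nat.pow_le_pow_right (by norm_num) hk
          omega
        have : c ^ (2 ^ k - 1) = c * c ^ (2 ^ k - 1 - 1) := by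
          rw [← pow_succ']
          congr 1
          omega
        rw [this]
        exact (hck.add_mul_left_right _)
  have hcopa : IsCoprime c (a (n - 1)) := hcop (n - 1) (by omega)
  -- key factorization
  have hkey : (s - a (n - 1)) * (s + a (n - 1)) = c ^ N := by
    have := hrec n hn
    rw [← hN] at this
    rw [← hs] at this
    ring_nf
    ring_nf at this
    linarith
  -- both factors are odd
  have hcNodd : Odd (c ^ N) := hodd.pow
  have hxodd : Odd (s - a (n - 1)) := by
    rcases Int.even_or_odd (s - a (n - 1)) with he | ho
    · exfalso
      have : Even (c ^ N) := by rw [← hkey]; exact he.mul_right _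
      exact (Int.not_odd_iff_even.2 this) hcNodd
    · exact ho
  -- coprimality of the two factors
  have hxa : IsCoprime (s - a (n - 1)) (a (n - 1)) := by
    have h1 : IsCoprime (c ^ N) (a (n - 1)) := hcopa.pow_left
    rw [← hkey] at h1
    exact h1.of_mul_left_left
  have hx2 : IsCoprime (s - a (n - 1)) 2 := by
    rcases hxodd with ⟨k, hk⟩
    exact ⟨1, -k, by rw [hk]; ring⟩
  have hxy : IsCoprime (s - a (n - 1)) (s + a (n - 1)) := by
    have h2a : IsCoprime (s - a (n - 1)) (2 * a (n - 1)) := hx2.mul_right hxa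
    have : s + a (n - 1) = 2 * a (n - 1) + (s - a (n - 1)) * 1 := by ring
    rw [this]
    exact h2a.add_mul_left_right 1
  -- extract the N-th powers
  obtain ⟨u, hu⟩ := Int.eq_pow_of_mul_eq_pow_odd_left hxy hNodd hkey
  obtain ⟨v, hv⟩ := Int.eq_pow_of_mul_eq_pow_odd_right hxy hNodd hkey
  refine ⟨u, v, ?_, ?_, hv, hu, by linarith⟩
  · have : IsCoprime (u ^ N) (v ^ N) := by rw [← hu, ← hv]; exact hxy
    exact IsCoprime.of_isCoprime_of_dvd_right
      (IsCoprime.of_isCoprime_of_dvd_left this (dvd_pow_self u (by omega)))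
      (dvd_pow_self v (by omega))
  · have : (u * v) ^ N = c ^ N := by
      rw [mul_pow, ← hu, ← hv, hkey]
    have := (hNodd.strictMono_pow (R := ℤ)).injective this
    omega
end

section
/- Let c ≥ 6 be an even integer, n ≥ 2, N = 2^(n-1)-1, and suppose a_n(c) is a perfect square with c = uv as in the associated factorization (u even, u and v coprime, v^N - u^N/4 = a_{n-1}(c)). Setting θ = 2^(1/N), one has (3 - 2√2)^(1/N) < u/(θ^2 v) < (3 + 2√2)^(1/N). In particular c > θ^2 (3 - 2√2)^(1/N) v^2. -/
/-- Auxiliary: the sequence is positive and bounded by `2 * c ^ (2^(k-1) - 1)`. -/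
lemma stmt_18_aux (c : ℤ) (hc : 6 ≤ c) (a : ℕ → ℤ) (h1 : a 1 = 1)
    (hrec : ∀ k, 2 ≤ k → a k = (a (k - 1)) ^ 2 + c ^ (2 ^ (k - 1) - 1)) :
    ∀ k, 1 ≤ k → 1 ≤ a k ∧ a k < 2 * c ^ (2 ^ (k - 1) - 1) := by
  intro k hk
  induction k, hk using Nat.le_induction with
  | base => simp [h1]
  | succ k hk ih =>
    have hrecc := hrec (k + 1) (by omega)
    simp only [Nat.add_sub_cancel] at hrecc
    have hc0 : (0 : ℤ) < c := by omega
    have hpow : (0 : ℤ) < c ^ (2 ^ (k - 1) - 1) := pow_pos hc0 _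
    have hpow2 : (0 : ℤ) < c ^ (2 ^ k - 2) := pow_pos hc0 _
    have h2k : 2 ^ k = 2 * 2 ^ (k - 1) := by
      rw [← pow_succ']; congr 1; omega
    have h1k : 1 ≤ 2 ^ (k - 1) := Nat.one_le_two_pow
    have hexp : 2 ^ k - 2 = 2 * (2 ^ (k - 1) - 1) := by omega
    have hsq : (c ^ (2 ^ (k - 1) - 1)) ^ 2 = c ^ (2 ^ k - 2) := by
      rw [hexp, pow_mul']
    have hexp2 : 2 ^ k - 1 = (2 ^ k - 2) + 1 := by omega
    have hck : c ^ (2 ^ k - 1) = c ^ (2 ^ k - 2) * c := by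
      rw [hexp2, pow_succ]
    have hsq2 : a k ^ 2 < 4 * c ^ (2 ^ k - 2) := by
      nlinarith [ih.1, ih.2, hpow, hsq]
    simp only [Nat.add_sub_cancel]
    constructor
    · nlinarith [ih.1, pow_pos hc0 (2 ^ k - 1)]
    · rw [hrecc, hck]
      nlinarith [hsq2, hpow2, hc]

set_option maxHeartbeats 1000000 in
theorem stmt_18 (c : ℤ) (hc : 6 ≤ c) (hceven : Even c)
    (a : ℕ → ℤ) (h1 : a 1 = 1)
    (hrec : ∀ k, 2 ≤ k → a k = (a (k - 1)) ^ 2 + c ^ (2 ^ (k - 1) - 1))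
    (n : ℕ) (hn : 2 ≤ n) (N : ℕ) (hN : N = 2 ^ (n - 1) - 1)
    (θ : ℝ) (hθ : θ = (2 : ℝ) ^ ((1 : ℝ) / N))
    (hsq : IsSquare (a n))
    (u v : ℤ) (huv : IsCoprime u v) (hu : Even u) (hc' : c = u * v)
    (hfac : (v : ℚ) ^ N - (1 / 4) * (u : ℚ) ^ N = (a (n - 1) : ℚ)) :
    ((3 : ℝ) - 2 * Real.sqrt 2) ^ ((1 : ℝ) / N) < (u : ℝ) / (θ ^ 2 * v) ∧
      (u : ℝ) / (θ ^ 2 * v) < ((3 : ℝ) + 2 * Real.sqrt 2) ^ ((1 : ℝ) / N) ∧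
      θ ^ 2 * ((3 : ℝ) - 2 * Real.sqrt 2) ^ ((1 : ℝ) / N) * (v : ℝ) ^ 2 < (c : ℝ) := by
  have hc0 : (0 : ℤ) < c := by omega
  -- basic exponent facts
  have hp1 : 1 ≤ 2 ^ (n - 2) := Nat.one_le_two_pow
  have h2n : 2 ^ (n - 1) = 2 * 2 ^ (n - 2) := by
    rw [show n - 1 = (n - 2) + 1 by omega, pow_succ']
  have hN1 : 1 ≤ N := by omega
  have hNR : (N : ℝ) ≠ 0 := Nat.cast_ne_zero.2 (by omega)
  -- bounds on a (n-1)
  obtain ⟨hA1, hA2⟩ := stmt_18_aux c hc a h1 hrec (n - 1) (by omega)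
  set e : ℕ := 2 ^ ((n - 1) - 1) - 1 with he
  clear_value e
  have hNe : N = 2 * e + 1 := by
    have : (n - 1) - 1 = n - 2 := by omega
    rw [he, this]; omega
  -- a(n-1)^2 < c^N = u^N * v^N
  have hce : (0 : ℤ) < c ^ e := pow_pos hc0 e
  have hcN : c ^ N = (c ^ e) ^ 2 * c := by
    rw [hNe, pow_succ, pow_mul']
  have hA2sq : (a (n - 1)) ^ 2 < c ^ N := by
    rw [hcN]; nlinarith [hA1, hA2, hce]
  have hAuv : (a (n - 1)) ^ 2 < u ^ N * v ^ N := by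
    rwa [hc', mul_pow] at hA2sq
  -- integer form of the factorization identity
  have hq : (4 : ℚ) * (v : ℚ) ^ N - (u : ℚ) ^ N = 4 * ((a (n - 1) : ℤ) : ℚ) := by
    linarith [hfac]
  have hz : 4 * v ^ N - u ^ N = 4 * a (n - 1) := by exact_mod_cast hq
  -- move to the reals
  have hR1 : 4 * (v : ℝ) ^ N - (u : ℝ) ^ N = 4 * ((a (n - 1) : ℤ) : ℝ) := by
    exact_mod_cast hz
  have hR2 : ((a (n - 1) : ℤ) : ℝ) ^ 2 < (u : ℝ) ^ N * (v : ℝ) ^ N := by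
    exact_mod_cast hAuv
  have hAr1 : (1 : ℝ) ≤ ((a (n - 1) : ℤ) : ℝ) := by exact_mod_cast hA1
  set U : ℝ := (u : ℝ) ^ N with hU
  set V : ℝ := (v : ℝ) ^ N with hV
  clear_value U V
  have hUV : 0 < U * V := lt_of_le_of_lt (by nlinarith) hR2
  have huvZ : 0 < u * v := hc' ▸ hc0
  have hvZ : v ≠ 0 := by rintro rfl; simp at huvZ
  have hvne : (v : ℝ) ≠ 0 := Int.cast_ne_zero.2 hvZ
  have hVne : V ≠ 0 := by rw [hV]; exact pow_ne_zero _ hvne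
  have hV2 : 0 < V ^ 2 := by positivity
  -- the quadratic inequality
  have hkey : 16 * V ^ 2 - 24 * U * V + U ^ 2 < 0 := by nlinarith [hR1, hR2]
  set x : ℝ := U / (4 * V) with hx
  clear_value x
  have hUx : U = 4 * V * x := by rw [hx]; field_simp
  have hkey2 : 16 * V ^ 2 * (x ^ 2 - 6 * x + 1) = 16 * V ^ 2 - 24 * U * V + U ^ 2 := by
    rw [hUx]; ring
  have hquad : x ^ 2 - 6 * x + 1 < 0 := by nlinarith [hkey, hkey2, hV2]
  have hx0 : 0 < x := by
    have hxx : x = (U * V) / (4 * V ^ 2) := by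
      rw [hx, div_eq_div_iff (by positivity) (by positivity)]; ring
    rw [hxx]; positivity
  -- sqrt 2 facts
  set s : ℝ := Real.sqrt 2 with hs
  clear_value s
  have hs2 : s ^ 2 = 2 := by rw [hs]; exact Real.sq_sqrt (by norm_num)
  have hs0 : 0 ≤ s := by rw [hs]; positivity
  have h8 : (x - 3) ^ 2 < (2 * s) ^ 2 := by nlinarith [hquad, hs2]
  obtain ⟨hlow', hupp'⟩ := abs_lt_of_sq_lt_sq' h8 (by linarith)
  have hlow : 3 - 2 * s < x := by linarith
  have hupp : x < 3 + 2 * s := by linarith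
  have hs15 : s < 1.5 := by nlinarith [hs2, hs0]
  have hLpos : (0 : ℝ) < 3 - 2 * s := by linarith
  have hMpos : (0 : ℝ) < 3 + 2 * s := by linarith
  -- θ facts
  have hθpos : 0 < θ := by rw [hθ]; positivity
  have hθN : (θ ^ 2) ^ N = 4 := by
    have h0 : (θ ^ 2) ^ N = θ ^ (2 * N) := by rw [pow_mul]
    rw [h0, hθ, ← Real.rpow_natCast ((2 : ℝ) ^ ((1 : ℝ) / N)) (2 * N),
      ← Real.rpow_mul (by norm_num : (0 : ℝ) ≤ 2)]
    have h1' : (1 : ℝ) / N * ((2 * N : ℕ) : ℝ) = ((2 : ℕ) : ℝ) := by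
      push_cast; field_simp
    rw [h1', Real.rpow_natCast]; norm_num
  set R : ℝ := (u : ℝ) / (θ ^ 2 * v) with hR
  clear_value R
  have hθne : θ ≠ 0 := ne_of_gt hθpos
  have hRalt : R = ((u : ℝ) * v) / (θ ^ 2 * (v : ℝ) ^ 2) := by
    rw [hR, div_eq_div_iff (by positivity) (by positivity)]; ring
  have huvR : (0 : ℝ) < (u : ℝ) * v := by exact_mod_cast huvZ
  have hRpos : 0 < R := by rw [hRalt]; positivity
  have hRN : R ^ N = x := by
    rw [hR, div_pow, mul_pow, hθN, hx, hU, hV]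
  have hLpow : (((3 : ℝ) - 2 * s) ^ ((1 : ℝ) / N)) ^ N = 3 - 2 * s := by
    rw [← Real.rpow_natCast (((3 : ℝ) - 2 * s) ^ ((1 : ℝ) / N)) N,
      ← Real.rpow_mul hLpos.le]
    have : (1 : ℝ) / N * (N : ℝ) = 1 := by field_simp
    rw [this, Real.rpow_one]
  have hMpow : (((3 : ℝ) + 2 * s) ^ ((1 : ℝ) / N)) ^ N = 3 + 2 * s := by
    rw [← Real.rpow_natCast (((3 : ℝ) + 2 * s) ^ ((1 : ℝ) / N)) N,
      ← Real.rpow_mul hMpos.le]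
    have : (1 : ℝ) / N * (N : ℝ) = 1 := by field_simp
    rw [this, Real.rpow_one]
  have goal1 : ((3 : ℝ) - 2 * s) ^ ((1 : ℝ) / N) < R := by
    apply lt_of_pow_lt_pow_left₀ N hRpos.le
    rw [hLpow, hRN]; exact hlow
  have goal2 : R < ((3 : ℝ) + 2 * s) ^ ((1 : ℝ) / N) := by
    apply lt_of_pow_lt_pow_left₀ N (Real.rpow_nonneg hMpos.le _)
    rw [hMpow, hRN]; exact hupp
  refine ⟨goal1, goal2, ?_⟩
  have hfin : θ ^ 2 * R * (v : ℝ) ^ 2 = (u : ℝ) * v := by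
    rw [hR]; field_simp [hθne]
  have hcuv : (c : ℝ) = (u : ℝ) * v := by exact_mod_cast hc'
  have hm : 0 < θ ^ 2 * (v : ℝ) ^ 2 := by positivity
  calc θ ^ 2 * ((3 : ℝ) - 2 * s) ^ ((1 : ℝ) / N) * (v : ℝ) ^ 2
      = (θ ^ 2 * (v : ℝ) ^ 2) * (((3 : ℝ) - 2 * s) ^ ((1 : ℝ) / N)) := by ring
    _ < (θ ^ 2 * (v : ℝ) ^ 2) * R := mul_lt_mul_of_pos_left goal1 hm
    _ = θ ^ 2 * R * (v : ℝ) ^ 2 := by ring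
    _ = (c : ℝ) := by rw [hfin, hcuv]
end

section
/- Let x < y be positive real numbers and M ≥ 1 an integer. Define z = (xy)^M / (x^(2M) + x^(2M-1)y + ... + y^(2M)) (sum of x^j y^(2M-j) for j = 0..2M in the denominator). Then z ≤ 1/(2M+1), and moreover (xy/(y-x)^2)·(1 - (2M+1)z) ≤ M(M+1)/2. -/
theorem stmt_19 (x y : ℝ) (hx : 0 < x) (hxy : x < y) (M : ℕ) (hM : 1 ≤ M)
    (z : ℝ)
    (hz : z = (x * y) ^ M / (∑ j ∈ Finset.range (2 * M + 1), x ^ j * y ^ (2 * M - j))) :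
    z ≤ 1 / (2 * M + 1) ∧
      (x * y / (y - x) ^ 2) * (1 - (2 * M + 1) * z) ≤ M * (M + 1) / 2 := by
  have hy : 0 < y := hx.trans hxy
  set f : ℕ → ℝ := fun j => x ^ j * y ^ (2 * M - j) with hf
  set S : ℝ := ∑ j ∈ Finset.range (2 * M + 1), f j with hSdef
  have hSpos : 0 < S :=
    Finset.sum_pos (fun j _ => by simp only [hf]; positivity) ⟨0, Finset.mem_range.2 (by omega)⟩
  set D : ℝ := ∑ k ∈ Finset.range M, x ^ k * y ^ k * (y ^ (M - k) - x ^ (M - k)) ^ 2 with hDdef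
  have hD0 : 0 ≤ D := Finset.sum_nonneg fun k _ => by positivity
  -- decomposition of S by pairing j with 2M - j
  have hsplit : S = (∑ j ∈ Finset.range (M + 1), f j) + ∑ i ∈ Finset.range M, f (2 * M - i) := by
    have h1 : S = (∑ j ∈ Finset.range (M + 1), f j)
        + ∑ j ∈ Finset.Ico (M + 1) (2 * M + 1), f j := by
      rw [hSdef, Finset.range_eq_Ico,
        ← Finset.sum_Ico_consecutive f (by omega : 0 ≤ M + 1) (by omega : M + 1 ≤ 2 * M + 1),
        ← Finset.range_eq_Ico]
    rw [h1, Finset.sum_Ico_eq_sum_range]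
    congr 1
    rw [show 2 * M + 1 - (M + 1) = M by omega,
      ← Finset.sum_range_reflect (fun i => f (M + 1 + i)) M]
    exact Finset.sum_congr rfl fun i hi => by
      have := Finset.mem_range.1 hi
      congr 1; omega
  have hfM : f M = (x * y) ^ M := by
    simp only [hf]; rw [show 2 * M - M = M by omega, mul_pow]
  have hpair : ∀ k ∈ Finset.range M,
      f k + f (2 * M - k)
        = 2 * (x * y) ^ M + x ^ k * y ^ k * (y ^ (M - k) - x ^ (M - k)) ^ 2 := by
    intro k hk
    have hk' := Finset.mem_range.1 hk
    obtain ⟨m, hm⟩ : ∃ m, M = k + m := ⟨M - k, by omega⟩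
    subst hm
    simp only [hf]
    rw [show 2 * (k + m) - k = k + 2 * m by omega,
      show 2 * (k + m) - (k + 2 * m) = k by omega,
      show k + m - k = m by omega]
    ring
  have hSD : S = (2 * M + 1) * (x * y) ^ M + D := by
    have h3 : S = (∑ k ∈ Finset.range M, (f k + f (2 * M - k))) + f M := by
      rw [hsplit, Finset.sum_range_succ, Finset.sum_add_distrib]; ring
    rw [h3, Finset.sum_congr rfl hpair, Finset.sum_add_distrib, Finset.sum_const,
      Finset.card_range, hfM, hDdef]
    push_cast
    ring
  -- key per-term estimate
  have hterm : ∀ k ∈ Finset.range M,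
      x * y * (x ^ k * y ^ k * (y ^ (M - k) - x ^ (M - k)) ^ 2)
        ≤ ((M - k : ℕ) : ℝ) * ((y - x) ^ 2 * S) := by
    intro k hk
    have hk' := Finset.mem_range.1 hk
    obtain ⟨m, hm1, hm⟩ : ∃ m, 1 ≤ m ∧ M = k + m := ⟨M - k, by omega, by omega⟩
    set g : ℝ := ∑ i ∈ Finset.range m, y ^ i * x ^ (m - 1 - i) with hg
    have hgeom : y ^ m - x ^ m = g * (y - x) := (geom_sum₂_mul y x m).symm
    have hg0 : 0 ≤ g := Finset.sum_nonneg fun i _ => by positivity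
    have hgle : g ≤ (m : ℝ) * y ^ (m - 1) := by
      have : ∀ i ∈ Finset.range m, y ^ i * x ^ (m - 1 - i) ≤ y ^ (m - 1) := by
        intro i hi
        have hi' := Finset.mem_range.1 hi
        calc y ^ i * x ^ (m - 1 - i) ≤ y ^ i * y ^ (m - 1 - i) := by
              apply mul_le_mul_of_nonneg_left (pow_le_pow_left₀ hx.le hxy.le _) (by positivity)
          _ = y ^ (m - 1) := by rw [← pow_add]; congr 1; omega
      calc g ≤ ∑ _i ∈ Finset.range m, y ^ (m - 1) := Finset.sum_le_sum this
        _ = (m : ℝ) * y ^ (m - 1) := by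
            rw [Finset.sum_const, Finset.card_range, nsmul_eq_mul]
    have hsum : x * y * (x ^ k * y ^ k) * (y ^ (m - 1) * g)
        = ∑ i ∈ Finset.range m, f (M - i) := by
      rw [hg, Finset.mul_sum, Finset.mul_sum]
      refine Finset.sum_congr rfl fun i hi => ?_
      have hi' := Finset.mem_range.1 hi
      obtain ⟨p, hp⟩ : ∃ p, m = i + p + 1 := ⟨m - i - 1, by omega⟩
      simp only [hf]
      rw [show M - i = k + p + 1 by omega, show 2 * M - (k + p + 1) = k + 2 * i + p + 1 by omega,
        show m - 1 - i = p by omega, show m - 1 = i + p by omega]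
      ring
    have hsub : ∑ i ∈ Finset.range m, f (M - i) ≤ S := by
      rw [show (∑ i ∈ Finset.range m, f (M - i))
          = ∑ j ∈ (Finset.range m).image (fun i => M - i), f j from
        (Finset.sum_image fun a ha b hb hab => by
          have := Finset.mem_range.1 ha; have := Finset.mem_range.1 hb; omega).symm]
      apply Finset.sum_le_sum_of_subset_of_nonneg
      · intro j hj
        simp only [Finset.mem_image, Finset.mem_range] at hj ⊢
        omega
      · intro j _ _
        simp only [hf]; positivity
    have key : x * y * (x ^ k * y ^ k) * (g * g) ≤ (m : ℝ) * S := by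
      calc x * y * (x ^ k * y ^ k) * (g * g)
          ≤ x * y * (x ^ k * y ^ k) * (((m : ℝ) * y ^ (m - 1)) * g) := by
            apply mul_le_mul_of_nonneg_left (mul_le_mul_of_nonneg_right hgle hg0) (by positivity)
        _ = (m : ℝ) * (x * y * (x ^ k * y ^ k) * (y ^ (m - 1) * g)) := by ring
        _ ≤ (m : ℝ) * S := by
            rw [hsum]; exact mul_le_mul_of_nonneg_left hsub (by positivity)
    rw [show M - k = m by omega, hgeom]
    calc x * y * (x ^ k * y ^ k * (g * (y - x)) ^ 2)
        = (x * y * (x ^ k * y ^ k) * (g * g)) * (y - x) ^ 2 := by ring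
      _ ≤ ((m : ℝ) * S) * (y - x) ^ 2 := mul_le_mul_of_nonneg_right key (sq_nonneg _)
      _ = (m : ℝ) * ((y - x) ^ 2 * S) := by ring
  -- Gauss sum
  have hgauss : (∑ k ∈ Finset.range M, ((M - k : ℕ) : ℝ)) = M * (M + 1) / 2 := by
    have h1 : ∀ k ∈ Finset.range M, ((M - k : ℕ) : ℝ) = (M : ℝ) - k := by
      intro k hk
      have := Finset.mem_range.1 hk
      rw [Nat.cast_sub this.le]
    rw [Finset.sum_congr rfl h1, Finset.sum_sub_distrib, Finset.sum_const, Finset.card_range,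
      nsmul_eq_mul]
    have h2 : ((∑ i ∈ Finset.range M, i : ℕ) : ℝ) * 2 = (M : ℝ) * ((M : ℝ) - 1) := by
      have h := Finset.sum_range_id_mul_two M
      have : ((∑ i ∈ Finset.range M, i : ℕ) * 2 : ℝ) = ((M * (M - 1) : ℕ) : ℝ) := by
        exact_mod_cast congrArg (Nat.cast (R := ℝ)) h
      rw [this, Nat.cast_mul, Nat.cast_sub hM]
      push_cast; ring
    push_cast at h2 ⊢
    linarith
  have hDg : x * y * D ≤ (M * (M + 1) / 2) * ((y - x) ^ 2 * S) := by
    rw [hDdef, Finset.mul_sum]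
    calc ∑ k ∈ Finset.range M, x * y * (x ^ k * y ^ k * (y ^ (M - k) - x ^ (M - k)) ^ 2)
        ≤ ∑ k ∈ Finset.range M, ((M - k : ℕ) : ℝ) * ((y - x) ^ 2 * S) :=
          Finset.sum_le_sum hterm
      _ = (∑ k ∈ Finset.range M, ((M - k : ℕ) : ℝ)) * ((y - x) ^ 2 * S) := by
          rw [Finset.sum_mul]
      _ = (M * (M + 1) / 2) * ((y - x) ^ 2 * S) := by rw [hgauss]
  constructor
  · rw [hz, div_le_div_iff₀ hSpos (by have : (0:ℝ) ≤ (M:ℝ) := Nat.cast_nonneg M; linarith)]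
    nlinarith [hSD, hD0]
  · have hxy2 : (0 : ℝ) < (y - x) ^ 2 := pow_pos (sub_pos.2 hxy) 2
    have hzz : 1 - (2 * M + 1) * z = D / S := by
      rw [hz]
      field_simp
      linarith [hSD]
    rw [hzz, div_mul_div_comm, div_le_iff₀ (mul_pos hxy2 hSpos)]
    calc x * y * D ≤ (M * (M + 1) / 2) * ((y - x) ^ 2 * S) := hDg
      _ = ↑M * (↑M + 1) / 2 * ((y - x) ^ 2 * S) := by ring
end
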